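/- Let n ≥ 2, N = 2^n, and let a be an odd integer. Then the smallest positive integer t such that the product of t copies of [[2a, -1], [1, 0]] over Z/NZ equals ± Id is t = 2^n. -/

import Mathlib

def lucasU (a : ℤ) : ℕ → ℤ
  | 0 => 0
  | 1 => 1
  | (t+2) => 2 * a * lucasU a (t+1) - lucasU a t

lemma lucasU_zero (a : ℤ) : lucasU a 0 = 0 := rfl
lemma lucasU_one (a : ℤ) : lucasU a 1 = 1 := rfl
lemma lucasU_rec (a : ℤ) (t : ℕ) : lucasU a (t+2) = 2 * a * lucasU a (t+1) - lucasU a t := rfl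

lemma lucasU_add (a : ℤ) (m n : ℕ) :
    lucasU a (m + n + 1) = lucasU a (m+1) * lucasU a (n+1) - lucasU a m * lucasU a n := by
  induction n using Nat.twoStepInduction with
  | zero => simp [lucasU]
  | one => show lucasU a (m + 2) = _; rw [lucasU_rec]; simp [lucasU]; ring
  | more n ih1 ih2 =>
    have h3 : m + (n+2) + 1 = (m + n + 1) + 2 := by omega
    rw [h3, lucasU_rec, show m+n+1+1 = m+(n+1)+1 from by ring, ih2, ih1,
      lucasU_rec a (n+1), lucasU_rec a n]
    ring

lemma lucasU_parity (a : ℤ) (t : ℕ) : (2:ℤ) ∣ lucasU a t - t := by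
  induction t using Nat.twoStepInduction with
  | zero => simp [lucasU]
  | one => simp [lucasU]
  | more t ih1 ih2 =>
    rw [lucasU_rec]
    set x := a * lucasU a (t+1) with hx
    have h : 2 * a * lucasU a (t+1) = 2 * x := by rw [hx]; ring
    rw [h]
    push_cast
    omega

lemma lucasU_double (a : ℤ) (ha : Odd a) (t : ℕ) :
    ∃ e : ℤ, Odd e ∧ lucasU a (2*(t+1)) = 2 * e * lucasU a (t+1) := by
  refine ⟨a * lucasU a (t+1) - lucasU a t, ?_, ?_⟩
  · obtain ⟨b, hb⟩ := ha
    have he : a * lucasU a (t+1) - lucasU a t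
        = 2*(b * lucasU a (t+1)) + lucasU a (t+1) - lucasU a t := by rw [hb]; ring
    have h1 := lucasU_parity a (t+1)
    have h2 := lucasU_parity a t
    rw [Int.odd_iff, he]
    push_cast at h1 ⊢
    omega
  · have h := lucasU_add a (t+1) t
    have h2 : t + 1 + t + 1 = 2*(t+1) := by ring
    rw [h2] at h
    rw [h, lucasU_rec]
    ring

lemma lucasU_odd_of_odd (a : ℤ) (t : ℕ) (ht : Odd t) : Odd (lucasU a t) := by
  have h := lucasU_parity a t
  rw [Int.odd_iff]
  rw [Nat.odd_iff] at ht
  omega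

lemma lucasU_dvd_index (a : ℤ) (ha : Odd a) (k : ℕ) :
    ∀ t : ℕ, 0 < t → (2:ℤ)^k ∣ lucasU a t → 2^k ∣ t := by
  induction k with
  | zero => intro t _ _; simpa using Nat.one_dvd t
  | succ k ih =>
    intro t ht hdvd
    rcases Nat.even_or_odd t with he | ho
    · obtain ⟨s, hs⟩ := he
      have hs' : 0 < s := by omega
      obtain ⟨s', hs''⟩ : ∃ s', s = s' + 1 := ⟨s - 1, by omega⟩
      obtain ⟨e, he, heq⟩ := lucasU_double a ha s'
      have ht2 : t = 2 * (s' + 1) := by omega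
      rw [ht2, heq] at hdvd
      have h2 : (2:ℤ)^k ∣ e * lucasU a (s'+1) := by
        have : (2:ℤ)^(k+1) = 2 * 2^k := by ring
        rw [this] at hdvd
        obtain ⟨c, hc⟩ := hdvd
        refine ⟨c, by linarith [hc]⟩
      have hcop : IsCoprime ((2:ℤ)^k) e :=
        IsCoprime.pow_left ((Int.prime_two.coprime_iff_not_dvd).mpr
          (by rwa [Int.two_dvd_ne_zero, ← Int.odd_iff]))
      have h3 : (2:ℤ)^k ∣ lucasU a (s'+1) := hcop.dvd_of_dvd_mul_left h2
      have h4 : 2^k ∣ s := hs'' ▸ ih (s'+1) (by omega) h3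
      have h5 : 2 * 2^k ∣ 2 * s := mul_dvd_mul_left 2 h4
      rw [pow_succ, mul_comm ((2:ℕ)^k) 2, show t = 2 * s from by omega]
      exact h5
    · exfalso
      have hodd := lucasU_odd_of_odd a t ho
      have h2 : (2:ℤ) ∣ lucasU a t := dvd_trans (dvd_pow_self 2 (Nat.succ_ne_zero k)) hdvd
      rw [Int.odd_iff] at hodd
      omega

lemma lucasU_pow_dvd (a : ℤ) (ha : Odd a) (k : ℕ) : (2:ℤ)^k ∣ lucasU a (2^k) := by
  induction k with
  | zero => simp [lucasU]
  | succ k ih =>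
    obtain ⟨s', hs'⟩ : ∃ s', (2:ℕ)^k = s' + 1 := ⟨2^k - 1, by have := Nat.one_le_two_pow (n := k); omega⟩
    obtain ⟨e, he, heq⟩ := lucasU_double a ha s'
    have h2 : (2:ℕ)^(k+1) = 2 * (s' + 1) := by rw [pow_succ, ← hs']; ring
    rw [h2, heq, ← hs']
    calc (2:ℤ)^(k+1) = 2 * 2^k := by ring
    _ ∣ 2 * e * lucasU a (2^k) := by
        obtain ⟨c, hc⟩ := ih
        exact ⟨e * c, by rw [hc]; ring⟩

lemma lucasU_pow_succ_one (a : ℤ) (ha : Odd a) (k : ℕ) (hk : 1 ≤ k) :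
    (2:ℤ)^k ∣ lucasU a (2^k + 1) - 1 := by
  induction k with
  | zero => omega
  | succ k ih =>
    rcases Nat.eq_zero_or_pos k with hk0 | hkpos
    · subst hk0
      have hodd : Odd (lucasU a 3) := lucasU_odd_of_odd a 3 ⟨1, rfl⟩
      rw [Int.odd_iff] at hodd
      show (2:ℤ)^1 ∣ lucasU a (2^1 + 1) - 1
      have : (2:ℕ)^1 + 1 = 3 := by norm_num
      rw [this, pow_one]
      omega
    · have ih' := ih hkpos
      have hsq := lucasU_add a (2^k) (2^k)
      have hidx : 2^k + 2^k + 1 = 2^(k+1) + 1 := by rw [pow_succ]; ring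
      rw [hidx] at hsq
      obtain ⟨c, hc⟩ := ih'
      obtain ⟨d, hd⟩ := lucasU_pow_dvd a ha k
      have hexp : lucasU a (2^(k+1) + 1) - 1
          = 2^(k+1) * (c + 2^(k-1) * c^2 - 2^(k-1) * d^2) := by
        rw [hsq]
        have hU1 : lucasU a (2^k + 1) = 1 + 2^k * c := by omega
        have hU2 : lucasU a (2^k) = 2^k * d := hd
        rw [hU1, hU2]
        have h2k : (2:ℤ)^k * 2^k = 2^(k+1) * 2^(k-1) := by
          rw [← pow_add, ← pow_add]; congr 1; omega
        linear_combination (c^2 - d^2) * h2k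
      exact ⟨_, hexp⟩

lemma matPow (a : ℤ) (t : ℕ) :
    (!![2*a, -1; 1, 0] : Matrix (Fin 2) (Fin 2) ℤ) ^ (t+1)
      = !![lucasU a (t+2), -(lucasU a (t+1)); lucasU a (t+1), -(lucasU a t)] := by
  induction t with
  | zero =>
    rw [pow_one]
    have h2 : lucasU a 2 = 2 * a := by rw [lucasU_rec]; simp [lucasU]
    rw [h2, lucasU_one, lucasU_zero]
    norm_num
  | succ t ih =>
    rw [pow_succ, ih, Matrix.mul_fin_two]
    rw [lucasU_rec a (t+1), lucasU_rec a t]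
    congr 1 <;> ring_nf

theorem stmt_18 (n : ℕ) (hn : 2 ≤ n) (N : ℕ) (hN : N = 2 ^ n) (a : ℤ) (ha : Odd a) :
    IsLeast {t : ℕ | 0 < t ∧
      ((!![((2 * a : ℤ) : ZMod N), -1; 1, 0] : Matrix (Fin 2) (Fin 2) (ZMod N)) ^ t = 1 ∨
       (!![((2 * a : ℤ) : ZMod N), -1; 1, 0] : Matrix (Fin 2) (Fin 2) (ZMod N)) ^ t = -1)}
      (2 ^ n) := by
  subst hN
  set M : Matrix (Fin 2) (Fin 2) (ZMod (2^n)) := !![((2 * a : ℤ) : ZMod (2^n)), -1; 1, 0] with hM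
  have hMmap : M = ((!![2*a, -1; 1, 0] : Matrix (Fin 2) (Fin 2) ℤ)).map
      (Int.cast : ℤ → ZMod (2^n)) := by
    ext i j
    fin_cases i <;> fin_cases j <;> simp [hM]
  have hpow : ∀ t : ℕ, M ^ t = ((!![2*a, -1; 1, 0] : Matrix (Fin 2) (Fin 2) ℤ) ^ t).map
      (Int.cast : ℤ → ZMod (2^n)) := by
    intro t
    have := map_pow ((Int.castRingHom (ZMod (2^n))).mapMatrix)
      (!![2*a, -1; 1, 0] : Matrix (Fin 2) (Fin 2) ℤ) t
    simp only [RingHom.mapMatrix_apply] at this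
    rw [hMmap]
    exact this.symm
  have hNdvd : ∀ x : ℤ, ((x : ℤ) : ZMod (2^n)) = 0 ↔ (2:ℤ)^n ∣ x := by
    intro x
    rw [ZMod.intCast_zmod_eq_zero_iff_dvd]
    push_cast
    rfl
  constructor
  · refine ⟨by positivity, Or.inl ?_⟩
    obtain ⟨s, hs⟩ : ∃ s, (2:ℕ)^n = s + 1 :=
      ⟨2^n - 1, by have := Nat.one_le_two_pow (n := n); omega⟩
    have h1 : (2:ℤ)^n ∣ lucasU a (s+2) - 1 := by
      have := lucasU_pow_succ_one a ha n (by omega)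
      rwa [show (2:ℕ)^n + 1 = s + 2 from by omega] at this
    have h2 : (2:ℤ)^n ∣ lucasU a (s+1) := by
      have := lucasU_pow_dvd a ha n
      rwa [hs] at this
    have h3 : (2:ℤ)^n ∣ lucasU a s + 1 := by
      have hrec := lucasU_rec a s
      have heq : lucasU a s + 1 = 2 * a * lucasU a (s+1) - (lucasU a (s+2) - 1) := by
        rw [hrec]; ring
      rw [heq]
      exact dvd_sub (Dvd.dvd.mul_left h2 (2*a)) h1
    have e1 : ((lucasU a (s+2) : ℤ) : ZMod (2^n)) = 1 := by
      have h0 : ((lucasU a (s+2) - 1 : ℤ) : ZMod (2^n)) = 0 := (hNdvd _).mpr h1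
      push_cast at h0
      exact sub_eq_zero.mp h0
    have e2 : ((lucasU a (s+1) : ℤ) : ZMod (2^n)) = 0 := (hNdvd _).mpr h2
    have e3 : ((lucasU a s : ℤ) : ZMod (2^n)) = -1 := by
      have h0 : ((lucasU a s + 1 : ℤ) : ZMod (2^n)) = 0 := (hNdvd _).mpr h3
      push_cast at h0
      exact eq_neg_of_add_eq_zero_left h0
    have hgoal : M ^ (2^n : ℕ) = M ^ (s+1) := congrArg _ hs
    rw [hgoal, hpow, matPow]
    ext i j
    fin_cases i <;> fin_cases j <;>
      simp [Matrix.map_apply, Matrix.one_apply, e1, e2, e3]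
  · rintro t ⟨ht, hcase⟩
    obtain ⟨s, hs⟩ : ∃ s, t = s + 1 := ⟨t - 1, by omega⟩
    have key : ((lucasU a (s+1) : ℤ) : ZMod (2^n)) = 0 := by
      rcases hcase with h | h <;>
      · rw [hs, hpow, matPow] at h
        have := congrFun (congrFun h 1) 0
        simpa [Matrix.map_apply, Matrix.one_apply] using this
    rw [hNdvd] at key
    have hdvd := lucasU_dvd_index a ha n (s+1) (by omega) key
    rw [← hs] at hdvd
    exact Nat.le_of_dvd ht hdvd
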